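/- Let n ≥ 1 and, for 0 ≤ i < n, let r_i be the ray with apex (i, 0) and direction (1, 0). Then sSup { min_{0 ≤ i < n} d∠(x, r_i) : x ∈ ℝ² } = 2π; that is, the upper bound 2π for the Brocard angle of the plane is attained by n parallel collinear rays. -/

import Mathlib

noncomputable section

open Real

abbrev Pt : Type := EuclideanSpace ℝ (Fin 2)

instance : Fact (Module.finrank ℝ Pt = 2) := ⟨finrank_euclideanSpace_fin⟩

noncomputable def stdOrient : Orientation ℝ Pt (Fin 2) :=
  (EuclideanSpace.basisFun (Fin 2) ℝ).toBasis.orientation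

/-- A ray in the plane, given by its apex and its direction vector. -/
structure Ray2 where
  apex : Pt
  dir : Pt

/-- The set of points of a ray. -/
def Ray2.carrier (r : Ray2) : Set Pt := {x | ∃ t : ℝ, 0 ≤ t ∧ x = r.apex + t • r.dir}

/-- The representative in `[0, 2π)` of an angle. -/
noncomputable def angleIco (θ : Real.Angle) : ℝ :=
  if 0 ≤ θ.toReal then θ.toReal else θ.toReal + 2 * π

open Classical in
/-- The counterclockwise angular distance from a point `x` to a ray `r`. -/
noncomputable def adist (x : Pt) (r : Ray2) : ℝ :=
  if x = r.apex then 0 else angleIco (stdOrient.oangle r.dir (x - r.apex))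

/-- The Voronoi region of a ray `r` in a finite set of rays `R`. -/
def rreg (R : Finset Ray2) (r : Ray2) : Set Pt :=
  {x | ∀ s ∈ R, s ≠ r → adist x r < adist x s}

/-- The rotating rays Voronoi diagram. -/
def RVD (R : Finset Ray2) : Set Pt :=
  (Set.univ \ ⋃ r ∈ R, rreg R r) ∪ ⋃ r ∈ R, r.carrier

/-- The point of the plane with the given coordinates. -/
noncomputable def pt (a b : ℝ) : Pt := (WithLp.equiv 2 (Fin 2 → ℝ)).symm ![a, b]

lemma pt_sub (a b c d : ℝ) : pt a b - pt c d = pt (a - c) (b - d) := by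
  ext i; fin_cases i <;> simp [pt]

lemma area_std (x y : Pt) : stdOrient.areaForm x y = x 0 * y 1 - x 1 * y 0 := by
  rw [Orientation.areaForm_to_volumeForm,
    stdOrient.volumeForm_robust (EuclideanSpace.basisFun (Fin 2) ℝ) rfl,
    Module.Basis.det_apply, Matrix.det_fin_two]
  simp [Module.Basis.toMatrix_apply, EuclideanSpace.basisFun_repr]
  ring

lemma inner_std (x y : Pt) : (inner ℝ x y : ℝ) = x 0 * y 0 + x 1 * y 1 := by
  simp [PiLp.inner_apply, Fin.sum_univ_two]
  ring

lemma angleIco_lt (θ : Real.Angle) : angleIco θ < 2 * π := by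
  unfold angleIco
  split_ifs with h
  · have := θ.toReal_le_pi
    linarith [pi_pos]
  · push_neg at h; linarith

lemma adist_lt (x : Pt) (r : Ray2) : adist x r < 2 * π := by
  unfold adist
  split_ifs with h
  · linarith [pi_pos]
  · exact angleIco_lt _

lemma key (c ε : ℝ) (hc : 1 ≤ c) (hε : 0 < ε) :
    2 * π - arcsin ε ≤ angleIco (stdOrient.oangle (pt 1 0) (pt c (-ε))) := by
  set z : ℂ := stdOrient.kahler (pt 1 0) (pt c (-ε)) with hz
  have hre : z.re = c := by
    simp [hz, Orientation.kahler_apply_apply, inner_std, area_std, pt]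
  have him : z.im = -ε := by
    simp [hz, Orientation.kahler_apply_apply, inner_std, area_std, pt]
  have habs : 1 ≤ ‖z‖ := by
    calc (1:ℝ) ≤ c := hc
    _ = z.re := hre.symm
    _ ≤ |z.re| := le_abs_self _
    _ ≤ ‖z‖ := Complex.abs_re_le_norm z
  have harg : Complex.arg z = -arcsin (ε / ‖z‖) := by
    rw [Complex.arg_of_re_nonneg (by rw [hre]; linarith), him, neg_div, Real.arcsin_neg]
  have hmono : arcsin (ε / ‖z‖) ≤ arcsin ε :=
    Real.monotone_arcsin (div_le_self hε.le habs)
  have hpos : 0 < arcsin (ε / ‖z‖) :=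
    Real.arcsin_pos.mpr (div_pos hε (lt_of_lt_of_le one_pos habs))
  have hoang : stdOrient.oangle (pt 1 0) (pt c (-ε)) = (Complex.arg z : Real.Angle) := rfl
  have htr : ((Complex.arg z : Real.Angle)).toReal = Complex.arg z :=
    Real.Angle.toReal_coe_eq_self_iff.mpr ⟨Complex.neg_pi_lt_arg z, Complex.arg_le_pi z⟩
  rw [hoang]
  unfold angleIco
  rw [htr]
  have : ¬ (0 ≤ Complex.arg z) := by rw [harg]; linarith
  rw [if_neg this, harg]
  linarith

/-- `n` parallel collinear rays attain the upper bound `2π` for the Brocard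
angle of the plane. -/
theorem stmt7 (n : ℕ) (hn : 1 ≤ n) :
    sSup {y : ℝ | ∃ x : Pt,
        y = (Finset.range n).inf' (Finset.nonempty_range_iff.mpr (by omega))
          fun i => adist x ⟨pt i 0, pt 1 0⟩} = 2 * π := by
  have hne : (Finset.range n).Nonempty := Finset.nonempty_range_iff.mpr (by omega)
  apply csSup_eq_of_forall_le_of_forall_lt_exists_gt
  · exact ⟨_, pt 0 0, rfl⟩
  · rintro a ⟨x, rfl⟩
    refine le_of_lt (lt_of_le_of_lt (Finset.inf'_le _ (Finset.mem_range.mpr (by omega : 0 < n)))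
      (adist_lt x _))
  · intro w hw
    set δ : ℝ := min (π / 2) ((2 * π - w) / 2) with hδ
    have hδ0 : 0 < δ := lt_min (by positivity) (by linarith)
    have hδle : δ ≤ π / 2 := min_le_left _ _
    have hδle2 : δ ≤ (2 * π - w) / 2 := min_le_right _ _
    set ε : ℝ := Real.sin δ with hε
    have hε0 : 0 < ε := Real.sin_pos_of_pos_of_lt_pi hδ0 (by linarith [pi_pos])
    have harcsin : arcsin ε = δ := Real.arcsin_sin (by linarith) hδle
    refine ⟨_, ⟨pt n (-ε), rfl⟩, ?_⟩
    rw [Finset.lt_inf'_iff]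
    intro i hi
    rw [Finset.mem_range] at hi
    have hc : (1:ℝ) ≤ (n:ℝ) - i := by
      have : (i:ℝ) + 1 ≤ n := by exact_mod_cast hi
      linarith
    have hne' : pt n (-ε) ≠ pt i 0 := by
      intro h
      have : (-ε : ℝ) = 0 := by simpa [pt] using congrArg (fun v : Pt => v 1) h
      linarith
    have : adist (pt n (-ε)) ⟨pt i 0, pt 1 0⟩
        = angleIco (stdOrient.oangle (pt 1 0) (pt ((n:ℝ) - i) (-ε))) := by
      rw [adist, if_neg hne']
      congr 1
      rw [show pt (n:ℝ) (-ε) - pt (i:ℝ) 0 = pt ((n:ℝ) - i) (-ε - 0) from pt_sub _ _ _ _,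
        sub_zero]
    rw [this]
    have := key ((n:ℝ) - i) ε hc hε0
    rw [harcsin] at this
    linarith

end
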